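/- Suppose (Δ_h, w_h) is a weighted sound abstraction of (Δ_l, w_l) relative to m. Then for every high-level formula φ, Pr(φ, Δ_h, w_h) = 1 implies Pr(m(φ), Δ_l, w_l) = 1. -/
import Mathlib


/-- Propositional formulas over atoms of type `α`. -/
inductive Form (α : Type) where
  | tru : Form α
  | atom : α → Form α
  | neg : Form α → Form α
  | conj : Form α → Form α → Form α
  | disj : Form α → Form α → Form α

/-- Truth value of a formula in a model `M : α → Bool`. -/
def Form.eval {α : Type} (M : α → Bool) : Form α → Bool
  | .tru => true
  | .atom a => M a
  | .neg φ => !(φ.eval M)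
  | .conj φ ψ => φ.eval M && ψ.eval M
  | .disj φ ψ => φ.eval M || ψ.eval M

/-- Homomorphic extension of a refinement mapping `m` on atoms to all formulas. -/
def Form.map {α β : Type} (m : α → Form β) : Form α → Form β
  | .tru => .tru
  | .atom a => m a
  | .neg φ => .neg (φ.map m)
  | .conj φ ψ => .conj (φ.map m) (ψ.map m)
  | .disj φ ψ => .disj (φ.map m) (ψ.map m)

/-- The set of atoms mentioned in a formula. -/
def Form.atoms {α : Type} [DecidableEq α] : Form α → Finset α
  | .tru => ∅
  | .atom a => {a}
  | .neg φ => φ.atoms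
  | .conj φ ψ => φ.atoms ∪ ψ.atoms
  | .disj φ ψ => φ.atoms ∪ ψ.atoms

/-- Weighted model count of `Δ` under literal weights `w` (`w a true` is the
weight of the positive literal on atom `a`, `w a false` of the negative one). -/
noncomputable def WMC {α : Type} [Fintype α] [DecidableEq α]
    (Δ : Form α) (w : α → Bool → ℝ) : ℝ :=
  ∑ M ∈ Finset.univ.filter (fun M : α → Bool => Δ.eval M = true), ∏ a, w a (M a)

/-- `Pr(φ, Δ, w) = WMC(φ ∧ Δ, w) / WMC(Δ, w)`. -/
noncomputable def Pr {α : Type} [Fintype α] [DecidableEq α]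
    (φ Δ : Form α) (w : α → Bool → ℝ) : ℝ :=
  WMC (Form.conj φ Δ) w / WMC Δ w

/-- `Mh` is `m`-isomorphic to `Ml`. -/
def Iso {α β : Type} (m : α → Form β) (Mh : α → Bool) (Ml : β → Bool) : Prop :=
  ∀ a : α, Mh a = (m a).eval Ml

open Finset in
lemma eval_map' {α β : Type} (m : α → Form β) (φ : Form α) (Ml : β → Bool) :
    (φ.map m).eval Ml = φ.eval (fun a => (m a).eval Ml) := by
  induction φ <;> simp [Form.map, Form.eval, *]

lemma WMC_nonneg' {α : Type} [Fintype α] [DecidableEq α] (Δ : Form α)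
    (w : α → Bool → ℝ) (hw : ∀ a b, 0 ≤ w a b) : 0 ≤ WMC Δ w :=
  Finset.sum_nonneg fun M _ => Finset.prod_nonneg fun a _ => hw a _

lemma wmc_split' {α : Type} [Fintype α] [DecidableEq α] (φ Δ : Form α)
    (w : α → Bool → ℝ) :
    WMC Δ w = WMC (Form.conj φ Δ) w +
      ∑ M ∈ Finset.univ.filter
          (fun M : α → Bool => Δ.eval M = true ∧ φ.eval M = false),
        ∏ a, w a (M a) := by
  unfold WMC
  rw [← Finset.sum_filter_add_sum_filter_not
      (Finset.univ.filter (fun M : α → Bool => Δ.eval M = true))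
      (fun M => φ.eval M = true)]
  rw [Finset.filter_filter, Finset.filter_filter]
  congr 1
  · apply Finset.sum_congr _ (fun _ _ => rfl)
    apply Finset.filter_congr
    intro M _
    simp [Form.eval, Bool.and_eq_true, and_comm]
  · apply Finset.sum_congr _ (fun _ _ => rfl)
    apply Finset.filter_congr
    intro M _
    simp


theorem stmt9 {α β : Type} [Fintype α] [DecidableEq α] [Fintype β] [DecidableEq β]
    (Δh : Form α) (Δl : Form β) (wh : α → Bool → ℝ) (wl : β → Bool → ℝ) (m : α → Form β)
    (hwh : ∀ a b, 0 ≤ wh a b) (hwl : ∀ a b, 0 ≤ wl a b)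
    (hΔh : WMC Δh wh ≠ 0) (hΔl : WMC Δl wl ≠ 0)
    (hsound : ∀ Ml : β → Bool, Δl.eval Ml = true →
      ∃ Mh : α → Bool, Δh.eval Mh = true ∧ Iso m Mh Ml)
    (hlit : ∀ a : α,
      (0 < Pr ((Form.atom a).map m) Δl wl → 0 < Pr (Form.atom a) Δh wh) ∧
      (0 < Pr ((Form.neg (Form.atom a)).map m) Δl wl →
        0 < Pr (Form.neg (Form.atom a)) Δh wh)) :
    ∀ φ : Form α, Pr φ Δh wh = 1 → Pr (φ.map m) Δl wl = 1 := by
  intro φ hφ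
  -- positivity of denominators
  have hΔlpos : 0 < WMC Δl wl := lt_of_le_of_ne (WMC_nonneg' Δl wl hwl) (Ne.symm hΔl)
  -- from hφ : Pr φ Δh wh = 1, numerator equals denominator
  have hnum : WMC (Form.conj φ Δh) wh = WMC Δh wh := by
    have := hφ
    rw [Pr, div_eq_one_iff_eq hΔh] at this
    exact this
  -- residual sum on high level is zero, hence each term is zero
  have hres : ∀ M ∈ Finset.univ.filter
      (fun M : α → Bool => Δh.eval M = true ∧ φ.eval M = false),
      (∏ a, wh a (M a)) = 0 := by
    have hsplit := wmc_split' φ Δh wh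
    rw [hnum] at hsplit
    have hzero : ∑ M ∈ Finset.univ.filter
        (fun M : α → Bool => Δh.eval M = true ∧ φ.eval M = false),
        ∏ a, wh a (M a) = 0 := by linarith
    exact (Finset.sum_eq_zero_iff_of_nonneg
      (fun M _ => Finset.prod_nonneg fun a _ => hwh a _)).mp hzero
  -- key claim
  have key : ∀ Ml : β → Bool, Δl.eval Ml = true → 0 < ∏ b, wl b (Ml b) →
      (φ.map m).eval Ml = true := by
    intro Ml hMl hwMl
    obtain ⟨Mh, hMh, hiso⟩ := hsound Ml hMl
    have hMhfun : Mh = fun a => (m a).eval Ml := funext hiso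
    rw [eval_map' m φ Ml, ← hMhfun]
    -- each weight wh a (Mh a) is positive
    have hwpos : ∀ a : α, 0 < wh a (Mh a) := by
      intro a
      -- the low-level literal probability is positive
      have hprl : ∀ ψ : Form α, (ψ.map m).eval Ml = true →
          0 < Pr (ψ.map m) Δl wl := by
        intro ψ hψ
        rw [Pr]
        apply div_pos _ hΔlpos
        have hmem : Ml ∈ Finset.univ.filter
            (fun M : β → Bool => (Form.conj (ψ.map m) Δl).eval M = true) := by
          simp [Form.eval, hMl, hψ]
        calc (0:ℝ) < ∏ b, wl b (Ml b) := hwMl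
          _ ≤ WMC (Form.conj (ψ.map m) Δl) wl :=
            Finset.single_le_sum
              (f := fun M : β → Bool => ∏ b, wl b (M b))
              (fun M _ => Finset.prod_nonneg fun b _ => hwl b _) hmem
      -- get positive high-level literal probability, extract a witness
      have hfin : ∀ (c : Bool) (ψ : Form α), 0 < Pr ψ Δh wh →
          (∀ M : α → Bool, ψ.eval M = true → M a = c) → 0 < wh a c := by
        intro c ψ hpr hlitev
        rw [Pr] at hpr
        have hn : WMC (Form.conj ψ Δh) wh ≠ 0 := by
          intro h0; rw [h0, zero_div] at hpr; exact lt_irrefl _ hpr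
        obtain ⟨M', hM'mem, hM'ne⟩ := Finset.exists_ne_zero_of_sum_ne_zero hn
        simp only [Finset.mem_filter, Form.eval, Bool.and_eq_true] at hM'mem
        have hfac : wh a (M' a) ≠ 0 := by
          intro h0
          exact hM'ne (Finset.prod_eq_zero (Finset.mem_univ a) h0)
        rw [hlitev M' hM'mem.2.1] at hfac
        exact lt_of_le_of_ne (hwh a _) (Ne.symm hfac)
      cases hb : Mh a with
      | true =>
        have h1 : ((Form.atom a : Form α).map m).eval Ml = true := by
          have := hiso a; rw [hb] at this
          simpa [Form.map] using this.symm
        refine hfin true (Form.atom a) ((hlit a).1 (hprl _ h1)) ?_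
        intro M hM; exact hM
      | false =>
        have h1 : ((Form.neg (Form.atom a) : Form α).map m).eval Ml = true := by
          have := hiso a; rw [hb] at this
          simp [Form.map, Form.eval, ← this]
        refine hfin false (Form.neg (Form.atom a)) ((hlit a).2 (hprl _ h1)) ?_
        intro M hM
        simp only [Form.eval, Bool.not_eq_true'] at hM
        exact hM
    -- Mh has positive weight, so it must satisfy φ
    by_contra hfalse
    have hmem : Mh ∈ Finset.univ.filter
        (fun M : α → Bool => Δh.eval M = true ∧ φ.eval M = false) := by
      simp [hMh, Bool.not_eq_true] at hfalse ⊢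
      exact hfalse
    have := hres Mh hmem
    have hpos : 0 < ∏ a, wh a (Mh a) :=
      Finset.prod_pos fun a _ => hwpos a
    rw [this] at hpos
    exact lt_irrefl _ hpos
  -- conclude: low-level residual sum is zero
  have hsplitl := wmc_split' (φ.map m) Δl wl
  have hresl : ∑ M ∈ Finset.univ.filter
      (fun M : β → Bool => Δl.eval M = true ∧ (φ.map m).eval M = false),
      ∏ b, wl b (M b) = 0 := by
    apply Finset.sum_eq_zero
    intro Ml hmem
    simp only [Finset.mem_filter] at hmem
    by_contra h0
    have hpos : 0 < ∏ b, wl b (Ml b) :=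
      lt_of_le_of_ne (Finset.prod_nonneg fun b _ => hwl b _) (Ne.symm h0)
    have := key Ml hmem.2.1 hpos
    rw [hmem.2.2] at this
    exact Bool.false_ne_true this
  rw [hresl, add_zero] at hsplitl
  rw [Pr, ← hsplitl, div_self hΔl]
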